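/- Let ψ be a real polynomial of even degree 2p ≥ 2 with no real fixed point (ψ(x) ≠ x for all x ∈ ℝ). Then for every b > 1 there exists m₀ ∈ ℕ such that for all x ∈ ℝ and all k ∈ ℕ, |ψ_{m₀+k}(x)| ≥ b^{2^k}. -/

import Mathlib

open Polynomial Filter

private lemma aux_tendsto_cocompact (P : Polynomial ℝ) (hd : P.natDegree ≠ 0)
    (he : Even P.natDegree) (hl : 0 < P.leadingCoeff) :
    Tendsto (fun x => P.eval x) (cocompact ℝ) atTop := by
  have hdegpos : 0 < P.degree := natDegree_pos_iff_degree_pos.1 (Nat.pos_of_ne_zero hd)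
  have htop : Tendsto (fun x => P.eval x) atTop atTop :=
    P.tendsto_atTop_of_leadingCoeff_nonneg hdegpos hl.le
  have hcompLead : (P.comp (-X)).leadingCoeff = P.leadingCoeff := by
    rw [leadingCoeff_comp (by simp), leadingCoeff_neg, leadingCoeff_X]
    rcases he with ⟨k, hk⟩
    rw [hk, ← two_mul, pow_mul]
    norm_num
  have hcompDeg : (P.comp (-X)).natDegree = P.natDegree := by
    rw [natDegree_comp]; simp
  have hcompdegpos : 0 < (P.comp (-X)).degree := by
    apply natDegree_pos_iff_degree_pos.1
    rw [hcompDeg]; exact Nat.pos_of_ne_zero hd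
  have htop' : Tendsto (fun x => (P.comp (-X)).eval x) atTop atTop :=
    (P.comp (-X)).tendsto_atTop_of_leadingCoeff_nonneg hcompdegpos
      (by rw [hcompLead]; exact hl.le)
  have hbot : Tendsto (fun x => P.eval x) atBot atTop := by
    have h2 := htop'.comp tendsto_neg_atBot_atTop
    have : (fun x => (P.comp (-X)).eval x) ∘ (Neg.neg : ℝ → ℝ)
        = fun x => P.eval x := by
      funext x; simp [Function.comp, eval_comp]
    rwa [this] at h2
  rw [cocompact_eq_atBot_atTop, tendsto_sup]
  exact ⟨hbot, htop⟩

private lemma aux_key (ψ : Polynomial ℝ) (hd2 : 2 ≤ ψ.natDegree)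
    (he : Even ψ.natDegree) (hl : 0 < ψ.leadingCoeff)
    (hfix : ∀ x : ℝ, ψ.eval x ≠ x) (b : ℝ) (hb : 1 < b) :
    ∃ m₀ : ℕ, ∀ x : ℝ, ∀ k : ℕ, b ^ (2 ^ k) ≤ (fun y : ℝ => ψ.eval y)^[m₀ + k] x := by
  have hd0 : ψ.natDegree ≠ 0 := by omega
  have hψ0 : ψ ≠ 0 := fun h => hd0 (by simp [h])
  have hdegX : (X : Polynomial ℝ).degree < ψ.degree := by
    rw [degree_X, degree_eq_natDegree hψ0]
    exact_mod_cast (by omega : 1 < ψ.natDegree)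
  have hcont : Continuous fun x : ℝ => ψ.eval x := ψ.continuous
  -- g = ψ - X
  set g : Polynomial ℝ := ψ - X with hg
  have hgdeg : g.natDegree = ψ.natDegree :=
    natDegree_sub_eq_left_of_natDegree_lt (by rw [natDegree_X]; omega)
  have hglead : g.leadingCoeff = ψ.leadingCoeff := leadingCoeff_sub_of_degree_lt hdegX
  have hgeval : ∀ x : ℝ, g.eval x = ψ.eval x - x := by intro x; simp [hg]
  have hgne : ∀ x : ℝ, g.eval x ≠ 0 := by
    intro x h; exact hfix x (by have := hgeval x; rw [h] at this; linarith)
  have hgcont : Continuous fun x : ℝ => g.eval x := g.continuous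
  have hgco : Tendsto (fun x => g.eval x) (cocompact ℝ) atTop :=
    aux_tendsto_cocompact g (by omega) (hgdeg ▸ he) (by rw [hglead]; exact hl)
  obtain ⟨x₀, hx₀⟩ := hgcont.exists_forall_le hgco
  set ε : ℝ := g.eval x₀ with hε
  have hεpos : 0 < ε := by
    rcases lt_or_gt_of_ne (hgne x₀) with hneg | hpos
    · exfalso
      have hgtop : Tendsto (fun x => g.eval x) atTop atTop :=
        g.tendsto_atTop_of_leadingCoeff_nonneg
          (natDegree_pos_iff_degree_pos.1 (by omega)) (by rw [hglead]; exact hl.le)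
      obtain ⟨y, hy⟩ := (hgtop.eventually (eventually_ge_atTop (1 : ℝ))).exists
      have : (0 : ℝ) ∈ Set.Icc (g.eval x₀) (g.eval y) := ⟨hneg.le, by linarith⟩
      obtain ⟨z, hz⟩ := intermediate_value_univ x₀ y hgcont this
      exact hgne z hz
    · exact hpos
  have hstep : ∀ y : ℝ, y + ε ≤ ψ.eval y := by
    intro y
    have := hx₀ y
    rw [hgeval y] at this
    linarith
  -- global minimum of ψ
  have hψco : Tendsto (fun x => ψ.eval x) (cocompact ℝ) atTop :=
    aux_tendsto_cocompact ψ hd0 he hl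
  obtain ⟨z₀, hz₀⟩ := hcont.exists_forall_le hψco
  set L : ℝ := ψ.eval z₀ with hL
  have hiter : ∀ n : ℕ, ∀ x : ℝ, L + n * ε ≤ (fun y : ℝ => ψ.eval y)^[n + 1] x := by
    intro n
    induction n with
    | zero => intro x; simpa using hz₀ x
    | succ n ih =>
      intro x
      rw [Function.iterate_succ_apply']
      have h1 := ih x
      have h2 := hstep ((fun y : ℝ => ψ.eval y)^[n + 1] x)
      push_cast
      push_cast at h1
      nlinarith [hεpos]
  -- growth: c * y^2 ≤ ψ(y) for |y| large
  set c : ℝ := ψ.leadingCoeff / 2 with hc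
  have hcpos : 0 < c := by positivity
  set q : Polynomial ℝ := ψ - C c * X ^ 2 with hq
  have hqcoeff : 0 < q.coeff ψ.natDegree := by
    have h1 : q.coeff ψ.natDegree = ψ.coeff ψ.natDegree - c * (X ^ 2 : Polynomial ℝ).coeff ψ.natDegree := by
      simp [hq, coeff_C_mul]
    rw [h1, coeff_X_pow]
    have hlc : ψ.coeff ψ.natDegree = ψ.leadingCoeff := rfl
    split_ifs with h
    · rw [hlc, hc]; linarith
    · rw [hlc]; linarith
  have hqdegle : q.natDegree ≤ ψ.natDegree := by
    refine le_trans (natDegree_sub_le _ _) ?_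
    have : (C c * X ^ 2 : Polynomial ℝ).natDegree ≤ 2 := by
      refine le_trans (natDegree_mul_le) ?_
      simp [natDegree_X_pow]
    omega
  have hqdeg : q.natDegree = ψ.natDegree :=
    le_antisymm hqdegle (le_natDegree_of_ne_zero hqcoeff.ne')
  have hqlead : 0 < q.leadingCoeff := by
    rw [leadingCoeff, hqdeg]; exact hqcoeff
  have hqeval : ∀ y : ℝ, q.eval y = ψ.eval y - c * y ^ 2 := by intro y; simp [hq]
  have hqco : Tendsto (fun x => q.eval x) (cocompact ℝ) atTop :=
    aux_tendsto_cocompact q (by omega) (hqdeg ▸ he) hqlead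
  have hqev : ∀ᶠ y in cocompact ℝ, 0 ≤ q.eval y :=
    hqco.eventually (eventually_ge_atTop (0 : ℝ))
  rw [cocompact_eq_atBot_atTop, eventually_sup, eventually_atBot, eventually_atTop] at hqev
  obtain ⟨⟨R₂, hR₂⟩, ⟨R₁, hR₁⟩⟩ := hqev
  set R₀ : ℝ := max R₁ (max (-R₂) 1) with hR₀
  have hR₀1 : 1 ≤ R₀ := le_trans (le_max_right _ _) (le_max_right _ _)
  have hgrow : ∀ y : ℝ, R₀ ≤ |y| → c * y ^ 2 ≤ ψ.eval y := by
    intro y hy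
    have h0 : 0 ≤ q.eval y := by
      rcases le_or_gt 0 y with h | h
      · have : R₁ ≤ y := by
          have := abs_of_nonneg h ▸ hy
          exact le_trans (le_max_left _ _) this
        exact hR₁ y this
      · have : y ≤ R₂ := by
          have h1 : -R₂ ≤ -y := le_trans (le_trans (le_max_left _ _) (le_max_right _ _))
            (by rwa [abs_of_neg h] at hy)
          linarith
        exact hR₂ y this
    rw [hqeval] at h0; linarith
  -- constants
  set M : ℝ := max 1 (max (c * R₀) (b * max 1 c)) with hM
  have hM1 : (1 : ℝ) ≤ M := le_max_left _ _
  have hMcR : c * R₀ ≤ M := le_trans (le_max_left _ _) (le_max_right _ _)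
  have hMb : b * max 1 c ≤ M := le_trans (le_max_right _ _) (le_max_right _ _)
  obtain ⟨m', hm'⟩ := exists_nat_ge ((M / c - L) / ε)
  have hbase0 : M / c ≤ L + m' * ε := by
    have := (div_le_iff₀ hεpos).1 hm'
    linarith
  refine ⟨m' + 1, ?_⟩
  have main : ∀ x : ℝ, ∀ k : ℕ,
      M ^ (2 ^ k) ≤ c * (fun y : ℝ => ψ.eval y)^[m' + 1 + k] x := by
    intro x k
    induction k with
    | zero =>
      have h1 := hiter m' x
      simp only [pow_zero, pow_one, Nat.add_zero]
      calc M = c * (M / c) := by field_simp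
        _ ≤ c * (L + m' * ε) := by nlinarith
        _ ≤ c * (fun y : ℝ => ψ.eval y)^[m' + 1] x := by nlinarith
    | succ k ih =>
      set u : ℝ := (fun y : ℝ => ψ.eval y)^[m' + 1 + k] x with hu
      have hMk : M ≤ M ^ (2 ^ k) := le_self_pow₀ hM1 (by positivity)
      have huR : R₀ ≤ u := by
        have h1 : c * R₀ ≤ c * u := le_trans hMcR (le_trans hMk ih)
        exact le_of_mul_le_mul_left h1 hcpos
      have hupos : 0 < u := lt_of_lt_of_le (by linarith) huR
      have hgrow' : c * u ^ 2 ≤ ψ.eval u := hgrow u (by rwa [abs_of_pos hupos])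
      have : M ^ (2 ^ (k + 1)) ≤ (c * u) ^ 2 := by
        rw [pow_succ, pow_mul]
        exact pow_le_pow_left₀ (by positivity) ih 2
      have hshow : (fun y : ℝ => ψ.eval y)^[m' + 1 + (k + 1)] x = ψ.eval u := by
        rw [show m' + 1 + (k + 1) = (m' + 1 + k) + 1 by ring, Function.iterate_succ_apply']
      rw [hshow]
      nlinarith
  intro x k
  have h1 := main x k
  have hbpos : (0 : ℝ) < b := by linarith
  have h2 : b ^ (2 ^ k) * c ≤ M ^ (2 ^ k) := by
    have hmaxc : (1 : ℝ) ≤ max 1 c := le_max_left _ _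
    have h3 : (b * max 1 c) ^ (2 ^ k) ≤ M ^ (2 ^ k) :=
      pow_le_pow_left₀ (by positivity) hMb _
    rw [mul_pow] at h3
    have h4 : c ≤ (max 1 c) ^ (2 ^ k) :=
      le_trans (le_max_right 1 c) (le_self_pow₀ hmaxc (by positivity))
    calc b ^ (2 ^ k) * c ≤ b ^ (2 ^ k) * (max 1 c) ^ (2 ^ k) := by
          have : (0:ℝ) < b ^ (2^k) := by positivity
          nlinarith
      _ ≤ M ^ (2 ^ k) := h3
  have h5 : c * b ^ (2 ^ k) ≤ c * (fun y : ℝ => ψ.eval y)^[m' + 1 + k] x := by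
    have h6 := h2.trans h1
    linarith
  exact le_of_mul_le_mul_left h5 hcpos

theorem stmt_7 (p : ℕ) (hp : 1 ≤ p) (ψ : Polynomial ℝ)
    (hdeg : ψ.natDegree = 2 * p)
    (hfix : ∀ x : ℝ, ψ.eval x ≠ x) :
    ∀ b : ℝ, 1 < b → ∃ m₀ : ℕ,
      ∀ x : ℝ, ∀ k : ℕ, 1 ≤ k →
        b ^ (2 ^ k) ≤ |(fun y : ℝ => ψ.eval y)^[m₀ + k] x| := by
  intro b hb
  have hd2 : 2 ≤ ψ.natDegree := by omega
  have he : Even ψ.natDegree := by rw [hdeg]; exact even_two_mul p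
  have hψ0 : ψ ≠ 0 := fun h => by simp [h] at hdeg; omega
  have hlne : ψ.leadingCoeff ≠ 0 := leadingCoeff_ne_zero.2 hψ0
  rcases hlne.lt_or_gt with hneg | hpos
  · -- negative leading coefficient: use φ = -(ψ.comp (-X))
    set φ : Polynomial ℝ := -(ψ.comp (-X)) with hφ
    have hφdeg : φ.natDegree = ψ.natDegree := by
      rw [hφ, natDegree_neg, natDegree_comp]; simp
    have hφlead : φ.leadingCoeff = -ψ.leadingCoeff := by
      rw [hφ, leadingCoeff_neg, leadingCoeff_comp (by simp), leadingCoeff_neg, leadingCoeff_X]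
      rcases he with ⟨k, hk⟩
      rw [hk, ← two_mul, pow_mul]
      norm_num
    have hφeval : ∀ x : ℝ, φ.eval x = -ψ.eval (-x) := by
      intro x; simp [hφ, eval_comp]
    have hφfix : ∀ x : ℝ, φ.eval x ≠ x := by
      intro x h
      rw [hφeval] at h
      exact hfix (-x) (by linarith)
    have hφit : ∀ n : ℕ, ∀ x : ℝ,
        (fun y : ℝ => φ.eval y)^[n] x = -(fun y : ℝ => ψ.eval y)^[n] (-x) := by
      intro n
      induction n with
      | zero => intro x; simp
      | succ n ih =>
        intro x
        rw [Function.iterate_succ_apply', Function.iterate_succ_apply', ih x, hφeval]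
        simp
    obtain ⟨m₀, hm₀⟩ := aux_key φ (by omega) (hφdeg ▸ he)
      (by rw [hφlead]; linarith) hφfix b hb
    refine ⟨m₀, fun x k _ => ?_⟩
    have := hm₀ (-x) k
    rw [hφit (m₀ + k) (-x)] at this
    simp only [neg_neg] at this
    exact le_trans this (neg_le_abs _)
  · obtain ⟨m₀, hm₀⟩ := aux_key ψ hd2 he hpos hfix b hb
    exact ⟨m₀, fun x k _ => le_trans (hm₀ x k) (le_abs_self _)⟩
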